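/- Proposition (odd case): let n ≥ 3 be odd. Then the subgroup of Equiv.Perm (Fin n → ZMod 12) generated by the cyclically consecutive contextual inversions {p i (i+1) : i ∈ Fin n} (indices taken cyclically in Fin n, so this set includes p (n−1) 0) equals the subgroup generated by all contextual inversions p i j with i ≠ j. -/

import Mathlib

/-- Contextual inversion `p i j` on pitch-class segments of length `n`. -/
def p {n : ℕ} (i j : Fin n) (x : Fin n → ZMod 12) : Fin n → ZMod 12 :=
  fun r => x i + x j - x r

/-- Contextual inversion `p i j` as a permutation (it is an involution). -/
def pEquiv {n : ℕ} (i j : Fin n) : Equiv.Perm (Fin n → ZMod 12) where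
  toFun := p i j
  invFun := p i j
  left_inv x := by funext r; simp only [p]; ring
  right_inv x := by funext r; simp only [p]; ring

lemma pEquiv_triple {n : ℕ} (a b c d : Fin n) :
    pEquiv a b * pEquiv b c * pEquiv c d = pEquiv a d := by
  ext x r
  simp only [Equiv.Perm.mul_apply, pEquiv, Equiv.coe_fn_mk, p]
  ring

theorem stmt12 (n : ℕ) [NeZero n] (hn : 3 ≤ n) (hodd : Odd n) :
    Subgroup.closure
        {g : Equiv.Perm (Fin n → ZMod 12) | ∃ i : Fin n, g = pEquiv i (i + 1)} =
      Subgroup.closure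
        {g : Equiv.Perm (Fin n → ZMod 12) | ∃ i j : Fin n, i ≠ j ∧ g = pEquiv i j} := by
  letI := Fin.instCommRing n
  have h10 : (1 : Fin n) ≠ 0 := by
    have : Nontrivial (Fin n) := Fin.nontrivial_iff_two_le.2 (by omega)
    exact one_ne_zero
  apply le_antisymm
  · refine (Subgroup.closure_le _).2 ?_
    rintro g ⟨i, rfl⟩
    refine Subgroup.subset_closure ⟨i, i + 1, ?_, rfl⟩
    intro h
    exact h10 (left_eq_add.1 h)
  · refine (Subgroup.closure_le _).2 ?_
    rintro g ⟨i, j, hij, rfl⟩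
    have key : ∀ m : ℕ, ∀ i : Fin n,
        pEquiv i (i + ((2 * m + 1 : ℕ) : Fin n)) ∈
          Subgroup.closure {g : Equiv.Perm (Fin n → ZMod 12) | ∃ i : Fin n, g = pEquiv i (i + 1)} := by
      intro m
      induction m with
      | zero =>
        intro i
        have : ((2 * 0 + 1 : ℕ) : Fin n) = 1 := by norm_num
        rw [this]
        exact Subgroup.subset_closure ⟨i, rfl⟩
      | succ m ih =>
        intro i
        have hc : ((2 * (m + 1) + 1 : ℕ) : Fin n) = 1 + 1 + ((2 * m + 1 : ℕ) : Fin n) := by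
          push_cast
          ring
        have heq : i + ((2 * (m + 1) + 1 : ℕ) : Fin n) =
            (i + 1 + 1) + ((2 * m + 1 : ℕ) : Fin n) := by
          rw [hc]; ring
        rw [heq, ← pEquiv_triple i (i + 1) (i + 1 + 1) ((i + 1 + 1) + ((2 * m + 1 : ℕ) : Fin n))]
        exact mul_mem (mul_mem (Subgroup.subset_closure ⟨i, rfl⟩)
          (Subgroup.subset_closure ⟨i + 1, rfl⟩)) (ih _)
    -- find odd natural k with (k : Fin n) = j - i
    obtain ⟨k, hk_odd, hk⟩ : ∃ k : ℕ, Odd k ∧ ((k : ℕ) : Fin n) = j - i := by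
      rcases Nat.even_or_odd (j - i).val with he | ho
      · refine ⟨(j - i).val + n, ?_, ?_⟩
        · exact he.add_odd hodd
        · push_cast
          rw [Fin.natCast_self, add_zero]
      · exact ⟨(j - i).val, ho, Fin.cast_val_eq_self _⟩
    obtain ⟨m, hm⟩ := hk_odd
    have hj : j = i + ((2 * m + 1 : ℕ) : Fin n) := by
      rw [← hm, hk]; ring
    rw [hj]
    exact key m i
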